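/- The relative operator entropy admits the integral representation S(A|B) = ∫₀¹ (A!ₜB − A)/t dt for positive invertible operators A, B. -/

import Mathlib

set_option maxHeartbeats 1000000
set_option synthInstance.maxHeartbeats 200000

open scoped Real
open MeasureTheory

variable {H : Type*} [NormedAddCommGroup H] [InnerProductSpace ℂ H] [CompleteSpace H]

/-- Square root via continuous functional calculus. -/
noncomputable def opSqrt (A : H →L[ℂ] H) : H →L[ℂ] H := cfc Real.sqrt A

/-- Real power via continuous functional calculus. -/
noncomputable def opRpow (A : H →L[ℂ] H) (p : ℝ) : H →L[ℂ] H :=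
  cfc (fun x : ℝ => x ^ p) A

/-- Logarithm via continuous functional calculus. -/
noncomputable def opLog (A : H →L[ℂ] H) : H →L[ℂ] H := cfc Real.log A

/-- Operator inverse (junk value `0` if not invertible). -/
noncomputable def opInv (A : H →L[ℂ] H) : H →L[ℂ] H := Ring.inverse A

/-- `A^{-1/2}`. -/
noncomputable def opInvSqrt (A : H →L[ℂ] H) : H →L[ℂ] H := opInv (opSqrt A)

/-- Weighted arithmetic mean `A ∇ₚ B`. -/
noncomputable def wNabla (p : ℝ) (A B : H →L[ℂ] H) : H →L[ℂ] H := (1 - p) • A + p • B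

/-- Weighted harmonic mean `A !ₚ B`. -/
noncomputable def wHarm (p : ℝ) (A B : H →L[ℂ] H) : H →L[ℂ] H :=
  opInv ((1 - p) • opInv A + p • opInv B)

/-- Weighted geometric mean `A ♯ₚ B`. -/
noncomputable def wGeom (p : ℝ) (A B : H →L[ℂ] H) : H →L[ℂ] H :=
  opSqrt A * opRpow (opInvSqrt A * B * opInvSqrt A) p * opSqrt A

/-- Relative operator entropy `S(A|B)`. -/
noncomputable def relEntropy (A B : H →L[ℂ] H) : H →L[ℂ] H :=
  opSqrt A * opLog (opInvSqrt A * B * opInvSqrt A) * opSqrt A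

/-- Furuta parametric relative operator entropy `Sₚ(A|B)`. -/
noncomputable def furutaEntropy (p : ℝ) (A B : H →L[ℂ] H) : H →L[ℂ] H :=
  opSqrt A * (opRpow (opInvSqrt A * B * opInvSqrt A) p *
    opLog (opInvSqrt A * B * opInvSqrt A)) * opSqrt A

/-- Tsallis relative operator entropy `Tₚ(A|B)`. -/
noncomputable def tsallisEntropy (p : ℝ) (A B : H →L[ℂ] H) : H →L[ℂ] H :=
  p⁻¹ • (wGeom p A B - A)

/-! ### Auxiliary material -/

/-- Clamp of a real number to `[0,1]`. -/
noncomputable def rClamp (t : ℝ) : ℝ := max 0 (min t 1)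

lemma rClamp_mem (t : ℝ) : rClamp t ∈ Set.Icc (0:ℝ) 1 :=
  ⟨le_max_left _ _, max_le (by norm_num) (min_le_right _ _)⟩

lemma rClamp_of_mem {t : ℝ} (ht : t ∈ Set.Ioc (0:ℝ) 1) : rClamp t = t := by
  rw [rClamp, min_eq_left ht.2, max_eq_right ht.1.le]

lemma continuous_rClamp : Continuous rClamp := by
  unfold rClamp; fun_prop

/-- The scalar integrand. -/
noncomputable def gFun (t x : ℝ) : ℝ := (x - 1) / ((1 - rClamp t) * x + rClamp t)

lemma gFun_den_pos {t x : ℝ} (hx : 0 < x) : 0 < (1 - rClamp t) * x + rClamp t := by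
  obtain ⟨h0, h1⟩ := rClamp_mem t
  rcases h0.eq_or_lt with h | h
  · rw [← h]; simpa using hx
  · nlinarith

lemma gFun_den_lb {t x : ℝ} (hx : 0 < x) : min x 1 ≤ (1 - rClamp t) * x + rClamp t := by
  obtain ⟨h0, h1⟩ := rClamp_mem t
  have h2 : min x 1 ≤ x := min_le_left _ _
  have h3 : min x 1 ≤ 1 := min_le_right _ _
  nlinarith

lemma intervalIntegral_gFun {x : ℝ} (hx : 0 < x) :
    ∫ t in (0:ℝ)..1, (x - 1) / ((1 - t) * x + t) = Real.log x := by
  have hden : ∀ t ∈ Set.uIcc (0:ℝ) 1, 0 < x + t * (1 - x) := by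
    intro t ht
    rw [Set.uIcc_of_le zero_le_one] at ht
    obtain ⟨h0, h1⟩ := ht
    rcases h0.eq_or_lt with rfl | h0'
    · simpa using hx
    · nlinarith
  have key : ∀ t ∈ Set.uIcc (0:ℝ) 1,
      HasDerivAt (fun t => -Real.log (x + t * (1 - x))) ((x - 1) / ((1 - t) * x + t)) t := by
    intro t ht
    have h1 : HasDerivAt (fun t : ℝ => x + t * (1 - x)) (1 - x) t := by
      simpa using ((hasDerivAt_id t).mul_const (1 - x)).const_add x
    have h2 := ((Real.hasDerivAt_log (hden t ht).ne').comp t h1).neg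
    refine HasDerivAt.congr_deriv h2 (Eq.symm ?_)
    have hne := (hden t ht).ne'
    have e : (1 - t) * x + t = x + t * (1 - x) := by ring
    rw [e, div_eq_iff hne]
    field_simp
    ring
  have hci : IntervalIntegrable (fun t => (x - 1) / ((1 - t) * x + t)) volume 0 1 := by
    apply ContinuousOn.intervalIntegrable
    apply ContinuousOn.div continuousOn_const (by fun_prop)
    intro t ht
    have := hden t ht
    nlinarith
  rw [intervalIntegral.integral_eq_sub_of_hasDerivAt key hci]
  simp [Real.log_one]

lemma setIntegral_gFun {x : ℝ} (hx : 0 < x) :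
    ∫ t in Set.Ioc (0:ℝ) 1, gFun t x = Real.log x := by
  rw [setIntegral_congr_fun measurableSet_Ioc
    (g := fun t => (x - 1) / ((1 - t) * x + t))
    (fun t ht => by rw [gFun, rClamp_of_mem ht]),
    ← intervalIntegral.integral_of_le zero_le_one]
  exact intervalIntegral_gFun hx

/-- `Ring.inverse` from a two-sided inverse. -/
lemma ringInverse_eq {M : Type*} [MonoidWithZero M] {x y : M}
    (h1 : y * x = 1) (h2 : x * y = 1) : Ring.inverse x = y :=
  Ring.inverse_unit (⟨x, y, h2, h1⟩ : Mˣ)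

lemma integral_cfc_gFun (C : H →L[ℂ] H) (hC : 0 ≤ C) (hC' : IsUnit C) :
    ∫ t in Set.Ioc (0:ℝ) 1, cfc (gFun t) C = cfc Real.log C := by
  have hC_sa : IsSelfAdjoint C := .of_nonneg hC
  have hspec : ∀ x ∈ spectrum ℝ C, 0 < x := by
    intro x hx
    have h0 : x ≠ 0 := by rintro rfl; exact spectrum.zero_notMem ℝ hC' hx
    exact (spectrum_nonneg_of_nonneg hC hx).lt_of_ne' h0
  -- bounds on the spectrum
  obtain ⟨M, hM⟩ : ∃ M : ℝ, ∀ x ∈ spectrum ℝ C, x ≤ M := by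
    rcases Set.eq_empty_or_nonempty (spectrum ℝ C) with h | h
    · exact ⟨1, fun x hx => absurd hx (h ▸ Set.notMem_empty x)⟩
    · obtain ⟨M, _, hmax⟩ := (spectrum.isCompact (𝕜 := ℝ) C).exists_isMaxOn h
        continuousOn_id
      exact ⟨M, fun x hx => hmax hx⟩
  obtain ⟨ε, hε, hεle⟩ : ∃ ε : ℝ, 0 < ε ∧ ∀ x ∈ spectrum ℝ C, ε ≤ x := by
    rcases Set.eq_empty_or_nonempty (spectrum ℝ C) with h | h
    · exact ⟨1, one_pos, fun x hx => absurd hx (h ▸ Set.notMem_empty x)⟩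
    · obtain ⟨ε, hεm, hmin⟩ := (spectrum.isCompact (𝕜 := ℝ) C).exists_isMinOn h
        continuousOn_id
      exact ⟨ε, hspec ε hεm, fun x hx => hmin hx⟩
  set K : ℝ := (|M| + 1) / min ε 1 with hK
  have hKpos : 0 < min ε 1 := lt_min hε one_pos
  have hbound : ∀ t : ℝ, ∀ x ∈ spectrum ℝ C, ‖gFun t x‖ ≤ ‖(fun _ : ℝ => K) t‖ := by
    intro t x hx
    have hxpos := hspec x hx
    have hd := gFun_den_pos (t := t) hxpos
    have hlb := gFun_den_lb (t := t) hxpos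
    have h1 : min ε 1 ≤ (1 - rClamp t) * x + rClamp t :=
      le_trans (le_min (min_le_of_left_le (hεle x hx)) (min_le_right _ _)) hlb
    have h2 : |x - 1| ≤ |M| + 1 := by
      have hM' := hM x hx
      rw [abs_le]
      constructor
      · nlinarith [neg_abs_le M, le_abs_self M]
      · nlinarith [neg_abs_le M, le_abs_self M]
    have hKnonneg : 0 ≤ K := div_nonneg (by positivity) hKpos.le
    rw [Real.norm_eq_abs, Real.norm_eq_abs, gFun, abs_div, abs_of_pos hd,
      abs_of_nonneg hKnonneg, hK, div_le_div_iff₀ hd hKpos]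
    exact mul_le_mul h2 h1 hKpos.le (by positivity)
  have hcont : Continuous (Function.uncurry
      (fun t => (spectrum ℝ C).restrict (gFun t))) := by
    apply Continuous.div
    · fun_prop
    · have hc := continuous_rClamp
      show Continuous fun p : ℝ × spectrum ℝ C =>
        (1 - rClamp p.1) * (p.2 : ℝ) + rClamp p.1
      fun_prop
    · intro p
      exact (gFun_den_pos (hspec _ p.2.2)).ne'
  rw [← cfc_integral (μ := volume.restrict (Set.Ioc (0:ℝ) 1)) gFun (fun _ => K) C
    ?_ (.of_forall fun t x hx => (hbound t x hx).trans_eq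
      (Real.norm_of_nonneg (div_nonneg (by positivity) hKpos.le))) (hasFiniteIntegral_const K)]
  swap
  · show ContinuousOn (fun p : ℝ × ℝ => (p.2 - 1) / ((1 - rClamp p.1) * p.2 + rClamp p.1)) _
    have hc := continuous_rClamp
    exact ContinuousOn.div (Continuous.continuousOn (by fun_prop))
      (Continuous.continuousOn (by fun_prop)) (fun p hp => (gFun_den_pos (hspec _ hp.2)).ne')
  exact cfc_congr fun x hx => setIntegral_gFun (hspec x hx)

/-- Integral representation `S(A|B) = ∫₀¹ (A!ₜB − A)/t dt` for positive
invertible `A, B`. -/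
theorem relEntropy_integral_rep (A B : H →L[ℂ] H) (hA : 0 ≤ A) (hA' : IsUnit A)
    (hB : 0 ≤ B) (hB' : IsUnit B) :
    relEntropy A B = ∫ t in (0:ℝ)..1, t⁻¹ • (wHarm t A B - A) := by
  have hA_sa : IsSelfAdjoint A := .of_nonneg hA
  set a : H →L[ℂ] H := opSqrt A with ha_def
  have hsqrt_ne : ∀ x ∈ spectrum ℝ A, Real.sqrt x ≠ 0 := by
    intro x hx
    have h0 : x ≠ 0 := by rintro rfl; exact spectrum.zero_notMem ℝ hA' hx
    exact Real.sqrt_ne_zero'.mpr ((spectrum_nonneg_of_nonneg hA hx).lt_of_ne' h0)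
  have ha_sa : IsSelfAdjoint a := cfc_predicate _ _
  have ha_unit : IsUnit a := (cfcUnits Real.sqrt A hsqrt_ne).isUnit
  have haa : a * a = A := by
    rw [ha_def, opSqrt, ← cfc_mul ..]
    conv_rhs => rw [← cfc_id ℝ A]
    exact cfc_congr fun x hx => Real.mul_self_sqrt (spectrum_nonneg_of_nonneg hA hx)
  set b : H →L[ℂ] H := opInvSqrt A with hb_def
  have hb_eq : b = cfc (fun x => (Real.sqrt x)⁻¹) A := by
    rw [hb_def, opInvSqrt, opInv]
    exact (cfc_inv Real.sqrt A hsqrt_ne).symm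
  have hb_sa : IsSelfAdjoint b := by rw [hb_eq]; exact cfc_predicate _ _
  have hba : b * a = 1 := by
    rw [hb_def, opInvSqrt, opInv]
    exact Ring.inverse_mul_cancel _ ha_unit
  have hab : a * b = 1 := by
    rw [hb_def, opInvSqrt, opInv]
    exact Ring.mul_inverse_cancel _ ha_unit
  have hb_unit : IsUnit b := ⟨⟨b, a, hba, hab⟩, rfl⟩
  have hab' : ∀ x : H →L[ℂ] H, a * (b * x) = x := fun x => by
    rw [← mul_assoc, hab, one_mul]
  have hba' : ∀ x : H →L[ℂ] H, b * (a * x) = x := fun x => by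
    rw [← mul_assoc, hba, one_mul]
  -- the central element `C`
  set C : H →L[ℂ] H := opInvSqrt A * B * opInvSqrt A with hC_def
  have hC_eq : C = b * B * b := rfl
  have hC : 0 ≤ C := IsSelfAdjoint.conjugate_nonneg hB hb_sa
  have hC_unit : IsUnit C := (hb_unit.mul hB').mul hb_unit
  have hC_sa : IsSelfAdjoint C := .of_nonneg hC
  have hCspec : ∀ x ∈ spectrum ℝ C, 0 < x := by
    intro x hx
    have h0 : x ≠ 0 := by rintro rfl; exact spectrum.zero_notMem ℝ hC_unit hx
    exact (spectrum_nonneg_of_nonneg hC hx).lt_of_ne' h0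
  have hinv_cont : ContinuousOn (fun x : ℝ => x⁻¹) (spectrum ℝ C) :=
    ContinuousOn.inv₀ continuousOn_id fun x hx => (hCspec x hx).ne'
  set iB : H →L[ℂ] H := Ring.inverse B with hiB_def
  have hBiB : B * iB = 1 := Ring.mul_inverse_cancel _ hB'
  have hiBB : iB * B = 1 := Ring.inverse_mul_cancel _ hB'
  have hBiB' : ∀ x : H →L[ℂ] H, B * (iB * x) = x := fun x => by
    rw [← mul_assoc, hBiB, one_mul]
  have hiBB' : ∀ x : H →L[ℂ] H, iB * (B * x) = x := fun x => by
    rw [← mul_assoc, hiBB, one_mul]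
  have hAinv : Ring.inverse A = b * b := by
    apply ringInverse_eq
    · rw [← haa]; simp only [mul_assoc, hba', hba]
    · rw [← haa]; simp only [mul_assoc, hab', hab]
  have hCinv : Ring.inverse C = a * iB * a := by
    apply ringInverse_eq
    · rw [hC_eq]; simp only [mul_assoc, hab', hiBB', hab]
    · rw [hC_eq]; simp only [mul_assoc, hba', hBiB', hba]
  have hinvC_cfc : cfc (fun x : ℝ => x⁻¹) C = Ring.inverse C :=
    (cfc_inv_id (R := ℝ) hC_unit.unit hC_sa).trans
      (Ring.inverse_unit hC_unit.unit).symm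
  -- the conjugation equivalence
  let e : (H →L[ℂ] H) ≃L[ℝ] (H →L[ℂ] H) :=
    { toFun := fun x => a * x * a
      invFun := fun x => b * x * b
      map_add' := fun x y => by noncomm_ring
      map_smul' := fun r x => by
        show a * (r • x) * a = r • (a * x * a)
        rw [mul_smul_comm, smul_mul_assoc]
      left_inv := fun x => by
        simp only [mul_assoc, hba', hab, mul_one]
      right_inv := fun x => by
        simp only [mul_assoc, hab', hba, mul_one]
      continuous_toFun := by
        show Continuous fun x : H →L[ℂ] H => a * x * a
        fun_prop
      continuous_invFun := by
        show Continuous fun x : H →L[ℂ] H => b * x * b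
        fun_prop }
  have he : ∀ x : H →L[ℂ] H, e x = a * x * a := fun _ => rfl
  -- the key pointwise identity
  have key : ∀ t ∈ Set.Ioc (0:ℝ) 1,
      t⁻¹ • (wHarm t A B - A) = e (cfc (gFun t) C) := by
    intro t ht
    obtain ⟨ht0, ht1⟩ := ht
    have hDfun_pos : ∀ x ∈ spectrum ℝ C, 0 < (1 - t) + t * x⁻¹ := by
      intro x hx
      have := hCspec x hx
      have h1 : 0 < t * x⁻¹ := by positivity
      nlinarith
    have hDfun : ∀ x ∈ spectrum ℝ C, (1 - t) + t * x⁻¹ ≠ 0 :=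
      fun x hx => (hDfun_pos x hx).ne'
    have hDcont : ContinuousOn (fun x : ℝ => (1 - t) + t * x⁻¹) (spectrum ℝ C) :=
      continuousOn_const.add (continuousOn_const.mul hinv_cont)
    set D : H →L[ℂ] H := cfc (fun x : ℝ => (1 - t) + t * x⁻¹) C with hD_def
    have hD_unit : IsUnit D := (cfcUnits _ C hDfun hDcont hC_sa).isUnit
    have hD_inv : Ring.inverse D = cfc (fun x : ℝ => ((1 - t) + t * x⁻¹)⁻¹) C :=
      (cfc_inv _ C hDfun hDcont hC_sa).symm
    have hDval : D = (1 - t) • (1 : H →L[ℂ] H) + t • Ring.inverse C := by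
      have h1 := cfc_add (a := C) (fun _ : ℝ => 1 - t) (fun x : ℝ => t * x⁻¹)
        continuousOn_const (continuousOn_const.mul hinv_cont)
      rw [hD_def, h1, cfc_const _ _ hC_sa, cfc_const_mul _ _ _ hinv_cont, hinvC_cfc,
        Algebra.algebraMap_eq_smul_one]
    have hmid : (1 - t) • Ring.inverse A + t • Ring.inverse B = b * D * b := by
      rw [hDval, hAinv, hCinv, ← hiB_def]
      simp only [mul_add, add_mul, mul_smul_comm, smul_mul_assoc, mul_one, one_mul,
        mul_assoc, hba', hab', hab, hba]
    have hDi' : ∀ x : H →L[ℂ] H, Ring.inverse D * (D * x) = x := fun x => by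
      rw [← mul_assoc, Ring.inverse_mul_cancel _ hD_unit, one_mul]
    have hDi2' : ∀ x : H →L[ℂ] H, D * (Ring.inverse D * x) = x := fun x => by
      rw [← mul_assoc, Ring.mul_inverse_cancel _ hD_unit, one_mul]
    have hharm : wHarm t A B = a * Ring.inverse D * a := by
      rw [wHarm, opInv, opInv, opInv, hmid]
      apply ringInverse_eq
      · simp only [mul_assoc, hab', hDi', hab]
      · simp only [mul_assoc, hba', hDi2', hba]
    have hA_cfc : A = a * cfc (fun _ : ℝ => (1:ℝ)) C * a := by
      rw [cfc_const_one ℝ C hC_sa, mul_one, haa]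
    rw [hharm]
    conv_lhs => rw [hA_cfc]
    rw [hD_inv, he]
    have hfactor : ∀ X Y : H →L[ℂ] H,
        t⁻¹ • (a * X * a - a * Y * a) = a * (t⁻¹ • (X - Y)) * a := by
      intro X Y
      simp only [smul_sub, mul_sub, sub_mul, mul_smul_comm, smul_mul_assoc]
    have hsub := cfc_sub (a := C) (fun x : ℝ => ((1 - t) + t * x⁻¹)⁻¹)
      (fun _ : ℝ => (1:ℝ)) (hDcont.inv₀ hDfun) continuousOn_const
    have hsmul := cfc_smul (a := C) t⁻¹
      (fun x : ℝ => ((1 - t) + t * x⁻¹)⁻¹ - 1)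
      ((hDcont.inv₀ hDfun).sub continuousOn_const)
    rw [hfactor, ← hsub, ← hsmul]
    have hcgr : cfc (fun x : ℝ => t⁻¹ • (((1 - t) + t * x⁻¹)⁻¹ - 1)) C
        = cfc (gFun t) C := by
      apply cfc_congr
      intro x hx
      have hxpos := hCspec x hx
      have hden : (0:ℝ) < (1 - t) * x + t := by nlinarith
      have hDx := hDfun_pos x hx
      rw [gFun, rClamp_of_mem ⟨ht0, ht1⟩]
      have hrw : (1 - t) + t * x⁻¹ = ((1 - t) * x + t) / x := by
        field_simp
      show t⁻¹ * (((1 - t) + t * x⁻¹)⁻¹ - 1) = (x - 1) / ((1 - t) * x + t)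
      rw [hrw, inv_div, div_sub_one hden.ne']
      rw [mul_div_assoc'] at *
      rw [div_eq_div_iff hden.ne' hden.ne']
      field_simp
      ring
    rw [hcgr]
  -- assemble
  rw [intervalIntegral.integral_of_le zero_le_one,
    setIntegral_congr_fun measurableSet_Ioc key,
    ContinuousLinearEquiv.integral_comp_comm e,
    integral_cfc_gFun C hC hC_unit, he]
  rfl
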